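/- arXiv:2102.02954 — 2 statements merged into one kernel-verified Lean document; each statement's English description precedes it below -/
import Mathlib

section
/- For θ > 3 and k, k' real, 2 ∑_{x≥1} [cos(2πkx) + cos(2πk'x) - cos(2π(k+k')x) - 1]/x^θ = 2(2π)² C₁(θ) k k' + o(|kk'|) as (k,k') → (0,0), where C₁(θ) = ∑_{x≥1} x^{2-θ}. -/
open Real Filter Asymptotics

private lemma aux_sin (t : ℝ) : |Real.sin t - t| ≤ 2 * t ^ 2 := by
  rcases le_or_gt |t| 1 with h | h
  · have hb := Real.sin_bound h
    have h3 : |Real.sin t - t| ≤ |Real.sin t - (t - t ^ 3 / 6)| + |t ^ 3 / 6| := by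
      have he : Real.sin t - t = (Real.sin t - (t - t ^ 3 / 6)) + (-(t ^ 3 / 6)) := by ring
      rw [he]
      exact (abs_add_le _ _).trans (by rw [abs_neg])
    have h4 : |t ^ 3 / 6| = |t| ^ 3 / 6 := by rw [abs_div, abs_pow]; norm_num
    have ht2 : t ^ 2 ≤ 1 := by nlinarith [sq_abs t, abs_nonneg t]
    have he4 : |t| ^ 4 = t ^ 2 * t ^ 2 := by rw [← sq_abs t]; ring
    have he3 : |t| ^ 3 = t ^ 2 * |t| := by rw [← sq_abs t]; ring
    have h5 : |t| ^ 4 ≤ t ^ 2 := by rw [he4]; nlinarith [sq_nonneg t]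
    have h6 : |t| ^ 3 ≤ t ^ 2 := by rw [he3]; nlinarith [sq_nonneg t, abs_nonneg t]
    nlinarith
  · have h1 : |Real.sin t| ≤ 1 := Real.abs_sin_le_one t
    have h2 : |Real.sin t - t| ≤ |Real.sin t| + |t| := abs_sub _ _
    have h3 : |t| ≤ t ^ 2 := by nlinarith [sq_abs t, abs_nonneg t]
    linarith

private lemma aux_cos (t : ℝ) : 1 - Real.cos t ≤ t ^ 2 / 2 := by
  linarith [Real.one_sub_sq_div_two_le_cos (x := t)]

private lemma aux_cos' (t : ℝ) : 1 - Real.cos t ≤ |t| := by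
  rcases le_or_gt |t| 2 with h | h
  · nlinarith [aux_cos t, sq_abs t, abs_nonneg t]
  · linarith [Real.neg_one_le_cos t]

private lemma aux_key1 (u v : ℝ) :
    |Real.cos u + Real.cos v - Real.cos (u + v) - 1 - u * v| ≤
      |u * v| * (2 * (|u| + |v|) + (|u| + |v|) ^ 2) := by
  have hid : Real.cos u + Real.cos v - Real.cos (u + v) - 1 - u * v =
      (Real.sin u * (Real.sin v - v) + v * (Real.sin u - u))
        - (1 - Real.cos u) * (1 - Real.cos v) := by
    rw [Real.cos_add]; ring
  have h1 : |Real.sin u * (Real.sin v - v)| ≤ |u| * (2 * v ^ 2) := by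
    rw [abs_mul]
    exact mul_le_mul (Real.abs_sin_le_abs) (aux_sin v) (abs_nonneg _) (abs_nonneg _)
  have h2 : |v * (Real.sin u - u)| ≤ |v| * (2 * u ^ 2) := by
    rw [abs_mul]
    exact mul_le_mul_of_nonneg_left (aux_sin u) (abs_nonneg _)
  have h3 : (0:ℝ) ≤ (1 - Real.cos u) * (1 - Real.cos v) :=
    mul_nonneg (by linarith [Real.cos_le_one u]) (by linarith [Real.cos_le_one v])
  have h4 : (1 - Real.cos u) * (1 - Real.cos v) ≤ (u ^ 2 / 2) * (v ^ 2 / 2) :=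
    mul_le_mul (aux_cos u) (aux_cos v) (by linarith [Real.cos_le_one v]) (by positivity)
  have h5 : |Real.cos u + Real.cos v - Real.cos (u + v) - 1 - u * v| ≤
      |Real.sin u * (Real.sin v - v)| + |v * (Real.sin u - u)|
        + (1 - Real.cos u) * (1 - Real.cos v) := by
    rw [hid]
    calc |Real.sin u * (Real.sin v - v) + v * (Real.sin u - u)
            - (1 - Real.cos u) * (1 - Real.cos v)|
        ≤ |Real.sin u * (Real.sin v - v) + v * (Real.sin u - u)|
            + |(1 - Real.cos u) * (1 - Real.cos v)| := abs_sub _ _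
      _ ≤ _ := by
          rw [abs_of_nonneg h3]
          gcongr
          exact abs_add_le _ _
  have ha := abs_nonneg u
  have hb := abs_nonneg v
  rw [abs_mul]
  nlinarith [sq_abs u, sq_abs v, mul_nonneg ha hb, sq_nonneg (|u| + |v|),
    mul_nonneg (mul_nonneg ha hb) (sq_nonneg (|u| + |v|)),
    mul_nonneg (mul_nonneg ha hb) (mul_nonneg ha hb)]

private lemma aux_key2 (u v : ℝ) :
    |Real.cos u + Real.cos v - Real.cos (u + v) - 1 - u * v| ≤ 3 * |u * v| := by
  have hid : Real.cos u + Real.cos v - Real.cos (u + v) - 1 - u * v =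
      (Real.sin u * Real.sin v - u * v)
        - (1 - Real.cos u) * (1 - Real.cos v) := by
    rw [Real.cos_add]; ring
  have h1 : |Real.sin u * Real.sin v - u * v| ≤ 2 * (|u| * |v|) := by
    have := abs_sub (Real.sin u * Real.sin v) (u * v)
    have h1a : |Real.sin u * Real.sin v| ≤ |u| * |v| := by
      rw [abs_mul]
      exact mul_le_mul Real.abs_sin_le_abs Real.abs_sin_le_abs (abs_nonneg _) (abs_nonneg _)
    have h1b : |u * v| = |u| * |v| := abs_mul u v
    linarith
  have h3 : (0:ℝ) ≤ (1 - Real.cos u) * (1 - Real.cos v) :=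
    mul_nonneg (by linarith [Real.cos_le_one u]) (by linarith [Real.cos_le_one v])
  have h4 : (1 - Real.cos u) * (1 - Real.cos v) ≤ |u| * |v| :=
    mul_le_mul (aux_cos' u) (aux_cos' v) (by linarith [Real.cos_le_one v]) (abs_nonneg _)
  have h5 := abs_sub (Real.sin u * Real.sin v - u * v) ((1 - Real.cos u) * (1 - Real.cos v))
  rw [abs_mul]
  rw [hid]
  rw [abs_of_nonneg h3] at h5
  linarith

/-- For θ > 3 and k, k' real,
2 ∑_{x≥1} [cos(2πkx) + cos(2πk'x) - cos(2π(k+k')x) - 1]/x^θ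
  = 2(2π)² C₁(θ) k k' + o(|kk'|) as (k,k') → (0,0), where C₁(θ) = ∑_{x≥1} x^{2-θ}. -/
theorem stmt9 (θ : ℝ) (hθ : 3 < θ) :
    (fun p : ℝ × ℝ =>
        2 * (∑' x : ℕ,
            (Real.cos (2 * π * p.1 * (x + 1)) + Real.cos (2 * π * p.2 * (x + 1))
              - Real.cos (2 * π * (p.1 + p.2) * (x + 1)) - 1) / ((x : ℝ) + 1) ^ θ)
          - 2 * (2 * π) ^ 2 * (∑' x : ℕ, ((x : ℝ) + 1) ^ (2 - θ)) * p.1 * p.2)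
      =o[nhds (0, 0)] (fun p : ℝ × ℝ => |p.1 * p.2|) := by
  have hπ := Real.pi_pos
  set c : ℝ := 2 * π with hc
  have hc0 : 0 < c := by positivity
  have hy0 : ∀ n : ℕ, (0:ℝ) < (n:ℝ) + 1 := fun n => by positivity
  have hy1 : ∀ n : ℕ, (1:ℝ) ≤ (n:ℝ) + 1 := fun n => by
    have h : (0:ℝ) ≤ (n:ℝ) := Nat.cast_nonneg n
    linarith
  have hpow : ∀ n : ℕ, ((n:ℝ)+1) ^ (2 - θ) = ((n:ℝ)+1) ^ (2:ℕ) / ((n:ℝ)+1) ^ θ := by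
    intro n
    rw [Real.rpow_sub (hy0 n)]
    norm_num [Real.rpow_natCast]
  set G : ℝ × ℝ → ℕ → ℝ := fun p n =>
    (Real.cos (c * p.1 * ((n:ℝ)+1)) + Real.cos (c * p.2 * ((n:ℝ)+1))
      - Real.cos (c * (p.1 + p.2) * ((n:ℝ)+1)) - 1
      - c ^ 2 * p.1 * p.2 * ((n:ℝ)+1) ^ (2:ℕ)) / ((n:ℝ)+1) ^ θ with hG
  have hsum2 : Summable (fun n : ℕ => ((n:ℝ)+1) ^ (2-θ)) := by
    have h1 : Summable (fun n : ℕ => (n:ℝ) ^ (2-θ)) := Real.summable_nat_rpow.2 (by linarith)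
    have h2 := (summable_nat_add_iff 1).2 h1
    exact h2.congr fun n => by push_cast; ring_nf
  -- the two central bounds on G
  have hGbound2 : ∀ (p : ℝ × ℝ) (n : ℕ),
      |G p n| ≤ 3 * c ^ 2 * ((n:ℝ)+1) ^ (2-θ) * |p.1 * p.2| := by
    intro p n
    have key := aux_key2 (c * p.1 * ((n:ℝ)+1)) (c * p.2 * ((n:ℝ)+1))
    rw [show c * p.1 * ((n:ℝ)+1) + c * p.2 * ((n:ℝ)+1) = c * (p.1 + p.2) * ((n:ℝ)+1) by ring,
      show c * p.1 * ((n:ℝ)+1) * (c * p.2 * ((n:ℝ)+1)) = c ^ 2 * p.1 * p.2 * ((n:ℝ)+1) ^ (2:ℕ)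
        by ring] at key
    have hd : (0:ℝ) < ((n:ℝ)+1) ^ θ := Real.rpow_pos_of_pos (hy0 n) θ
    have habs : |c ^ 2 * p.1 * p.2 * ((n:ℝ)+1) ^ (2:ℕ)|
        = c ^ 2 * ((n:ℝ)+1) ^ (2:ℕ) * |p.1 * p.2| := by
      rw [show c ^ 2 * p.1 * p.2 * ((n:ℝ)+1) ^ (2:ℕ)
          = (c ^ 2 * ((n:ℝ)+1) ^ (2:ℕ)) * (p.1 * p.2) by ring, abs_mul,
        abs_of_pos (by positivity : (0:ℝ) < c ^ 2 * ((n:ℝ)+1) ^ (2:ℕ))]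
    calc |G p n| = |Real.cos (c * p.1 * ((n:ℝ)+1)) + Real.cos (c * p.2 * ((n:ℝ)+1))
          - Real.cos (c * (p.1 + p.2) * ((n:ℝ)+1)) - 1
          - c ^ 2 * p.1 * p.2 * ((n:ℝ)+1) ^ (2:ℕ)| / ((n:ℝ)+1) ^ θ := by
            rw [hG, abs_div, abs_of_pos hd]
      _ ≤ (3 * (c ^ 2 * ((n:ℝ)+1) ^ (2:ℕ) * |p.1 * p.2|)) / ((n:ℝ)+1) ^ θ := by
            rw [← habs]; gcongr
      _ = 3 * c ^ 2 * ((n:ℝ)+1) ^ (2-θ) * |p.1 * p.2| := by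
            rw [hpow n]; field_simp
  have hGbound1 : ∀ (p : ℝ × ℝ) (n : ℕ),
      |G p n| ≤ c ^ 2 * ((n:ℝ)+1) ^ (2-θ) *
        (2 * (c * ((n:ℝ)+1) * (|p.1| + |p.2|)) + (c * ((n:ℝ)+1) * (|p.1| + |p.2|)) ^ 2)
          * |p.1 * p.2| := by
    intro p n
    have key := aux_key1 (c * p.1 * ((n:ℝ)+1)) (c * p.2 * ((n:ℝ)+1))
    rw [show c * p.1 * ((n:ℝ)+1) + c * p.2 * ((n:ℝ)+1) = c * (p.1 + p.2) * ((n:ℝ)+1) by ring,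
      show c * p.1 * ((n:ℝ)+1) * (c * p.2 * ((n:ℝ)+1)) = c ^ 2 * p.1 * p.2 * ((n:ℝ)+1) ^ (2:ℕ)
        by ring] at key
    have hd : (0:ℝ) < ((n:ℝ)+1) ^ θ := Real.rpow_pos_of_pos (hy0 n) θ
    have habs : |c ^ 2 * p.1 * p.2 * ((n:ℝ)+1) ^ (2:ℕ)|
        = c ^ 2 * ((n:ℝ)+1) ^ (2:ℕ) * |p.1 * p.2| := by
      rw [show c ^ 2 * p.1 * p.2 * ((n:ℝ)+1) ^ (2:ℕ)
          = (c ^ 2 * ((n:ℝ)+1) ^ (2:ℕ)) * (p.1 * p.2) by ring, abs_mul,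
        abs_of_pos (by positivity : (0:ℝ) < c ^ 2 * ((n:ℝ)+1) ^ (2:ℕ))]
    have habs1 : |c * p.1 * ((n:ℝ)+1)| = c * ((n:ℝ)+1) * |p.1| := by
      rw [show c * p.1 * ((n:ℝ)+1) = (c * ((n:ℝ)+1)) * p.1 by ring, abs_mul,
        abs_of_pos (by positivity : (0:ℝ) < c * ((n:ℝ)+1))]
    have habs2 : |c * p.2 * ((n:ℝ)+1)| = c * ((n:ℝ)+1) * |p.2| := by
      rw [show c * p.2 * ((n:ℝ)+1) = (c * ((n:ℝ)+1)) * p.2 by ring, abs_mul,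
        abs_of_pos (by positivity : (0:ℝ) < c * ((n:ℝ)+1))]
    rw [habs, habs1, habs2] at key
    calc |G p n| = |Real.cos (c * p.1 * ((n:ℝ)+1)) + Real.cos (c * p.2 * ((n:ℝ)+1))
          - Real.cos (c * (p.1 + p.2) * ((n:ℝ)+1)) - 1
          - c ^ 2 * p.1 * p.2 * ((n:ℝ)+1) ^ (2:ℕ)| / ((n:ℝ)+1) ^ θ := by
            rw [hG, abs_div, abs_of_pos hd]
      _ ≤ (c ^ 2 * ((n:ℝ)+1) ^ (2:ℕ) * |p.1 * p.2| *
            (2 * (c * ((n:ℝ)+1) * |p.1| + c * ((n:ℝ)+1) * |p.2|)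
              + (c * ((n:ℝ)+1) * |p.1| + c * ((n:ℝ)+1) * |p.2|) ^ 2)) / ((n:ℝ)+1) ^ θ := by
            gcongr
      _ = c ^ 2 * ((n:ℝ)+1) ^ (2-θ) *
            (2 * (c * ((n:ℝ)+1) * (|p.1| + |p.2|)) + (c * ((n:ℝ)+1) * (|p.1| + |p.2|)) ^ 2)
              * |p.1 * p.2| := by
            rw [hpow n]; field_simp
  have htermSum : ∀ p : ℝ × ℝ, Summable (fun n : ℕ =>
      (Real.cos (c * p.1 * ((n:ℝ)+1)) + Real.cos (c * p.2 * ((n:ℝ)+1))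
        - Real.cos (c * (p.1 + p.2) * ((n:ℝ)+1)) - 1) / ((n:ℝ)+1) ^ θ) := by
    intro p
    apply Summable.of_norm_bounded (g := fun n : ℕ => 4 * ((n:ℝ)+1) ^ (2-θ)) (hsum2.mul_left 4)
    intro n
    have hd : (0:ℝ) < ((n:ℝ)+1) ^ θ := Real.rpow_pos_of_pos (hy0 n) θ
    rw [Real.norm_eq_abs, abs_div, abs_of_pos hd]
    have hnum : |Real.cos (c * p.1 * ((n:ℝ)+1)) + Real.cos (c * p.2 * ((n:ℝ)+1))
        - Real.cos (c * (p.1 + p.2) * ((n:ℝ)+1)) - 1| ≤ 4 := by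
      have h1 := Real.abs_cos_le_one (c * p.1 * ((n:ℝ)+1))
      have h2 := Real.abs_cos_le_one (c * p.2 * ((n:ℝ)+1))
      have h3 := Real.abs_cos_le_one (c * (p.1 + p.2) * ((n:ℝ)+1))
      rw [abs_le] at h1 h2 h3 ⊢
      constructor <;> [linarith [h1.1, h2.1, h3.2]; linarith [h1.2, h2.2, h3.1]]
    calc _ ≤ (4:ℝ) / ((n:ℝ)+1) ^ θ := by gcongr
      _ = 4 * ((1:ℝ) / ((n:ℝ)+1) ^ θ) := by ring
      _ ≤ 4 * (((n:ℝ)+1) ^ (2:ℕ) / ((n:ℝ)+1) ^ θ) := by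
          have h1 : (1:ℝ) ≤ ((n:ℝ)+1) ^ (2:ℕ) := by nlinarith [hy1 n]
          gcongr
      _ = 4 * ((n:ℝ)+1) ^ (2-θ) := by rw [hpow n]
  have hGterm_eq : ∀ (p : ℝ × ℝ) (n : ℕ),
      G p n = (Real.cos (c * p.1 * ((n:ℝ)+1)) + Real.cos (c * p.2 * ((n:ℝ)+1))
        - Real.cos (c * (p.1 + p.2) * ((n:ℝ)+1)) - 1) / ((n:ℝ)+1) ^ θ
          - c ^ 2 * p.1 * p.2 * ((n:ℝ)+1) ^ (2 - θ) := by
    intro p n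
    rw [hG, hpow n]; ring
  have hEq : ∀ p : ℝ × ℝ,
      (2 * (∑' x : ℕ,
          (Real.cos (c * p.1 * ((x:ℝ) + 1)) + Real.cos (c * p.2 * ((x:ℝ) + 1))
            - Real.cos (c * (p.1 + p.2) * ((x:ℝ) + 1)) - 1) / ((x : ℝ) + 1) ^ θ)
          - 2 * c ^ 2 * (∑' x : ℕ, ((x : ℝ) + 1) ^ (2 - θ)) * p.1 * p.2)
        = 2 * ∑' n : ℕ, G p n := by
    intro p
    have h1 : ∑' n : ℕ, G p n = (∑' n : ℕ,
        (Real.cos (c * p.1 * ((n:ℝ)+1)) + Real.cos (c * p.2 * ((n:ℝ)+1))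
          - Real.cos (c * (p.1 + p.2) * ((n:ℝ)+1)) - 1) / ((n:ℝ)+1) ^ θ)
        - ∑' n : ℕ, c ^ 2 * p.1 * p.2 * ((n:ℝ)+1) ^ (2 - θ) := by
      rw [← Summable.tsum_sub (htermSum p) (hsum2.mul_left (c ^ 2 * p.1 * p.2))]
      exact tsum_congr fun n => hGterm_eq p n
    rw [h1, tsum_mul_left]; ring
  have hGzero : ∀ p : ℝ × ℝ, p.1 * p.2 = 0 → ∀ n : ℕ, G p n = 0 := by
    intro p hp n
    rcases mul_eq_zero.1 hp with h | h
    · rw [hG]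
      simp only [h, mul_zero, zero_mul, zero_add, Real.cos_zero]
      ring_nf
    · rw [hG]
      simp only [h, mul_zero, zero_mul, add_zero, Real.cos_zero]
      ring_nf
  have hzero : ∀ p : ℝ × ℝ, |p.1 * p.2| = 0 →
      (2 * (∑' x : ℕ,
          (Real.cos (c * p.1 * ((x:ℝ) + 1)) + Real.cos (c * p.2 * ((x:ℝ) + 1))
            - Real.cos (c * (p.1 + p.2) * ((x:ℝ) + 1)) - 1) / ((x : ℝ) + 1) ^ θ)
          - 2 * c ^ 2 * (∑' x : ℕ, ((x : ℝ) + 1) ^ (2 - θ)) * p.1 * p.2) = 0 := by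
    intro p hp
    have hp' : p.1 * p.2 = 0 := abs_eq_zero.1 hp
    have h2 : ∑' n : ℕ, G p n = 0 := by
      simp [hGzero p hp']
    rw [hEq p, h2, mul_zero]
  rw [isLittleO_iff_tendsto hzero]
  have hFeq : ∀ p : ℝ × ℝ,
      (2 * (∑' x : ℕ,
          (Real.cos (c * p.1 * ((x:ℝ) + 1)) + Real.cos (c * p.2 * ((x:ℝ) + 1))
            - Real.cos (c * (p.1 + p.2) * ((x:ℝ) + 1)) - 1) / ((x : ℝ) + 1) ^ θ)
          - 2 * c ^ 2 * (∑' x : ℕ, ((x : ℝ) + 1) ^ (2 - θ)) * p.1 * p.2) / |p.1 * p.2|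
        = ∑' n : ℕ, 2 * G p n / |p.1 * p.2| := by
    intro p
    rw [hEq p, tsum_div_const, tsum_mul_left]
  refine Tendsto.congr (fun p => (hFeq p).symm) ?_
  have h00 : (0:ℝ) = ∑' _ : ℕ, (0:ℝ) := by simp
  rw [h00]
  apply tendsto_tsum_of_dominated_convergence
      (bound := fun n : ℕ => 6 * c ^ 2 * ((n:ℝ)+1) ^ (2-θ))
  · exact hsum2.mul_left _
  · intro n
    apply squeeze_zero_norm (a := fun p : ℝ × ℝ =>
      2 * (c ^ 2 * ((n:ℝ)+1) ^ (2-θ) *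
        (2 * (c * ((n:ℝ)+1) * (|p.1| + |p.2|)) + (c * ((n:ℝ)+1) * (|p.1| + |p.2|)) ^ 2)))
    · intro p
      rw [Real.norm_eq_abs]
      by_cases hd : p.1 * p.2 = 0
      · rw [hGzero p hd n]
        simp only [mul_zero, zero_div, abs_zero]
        positivity
      · have hd0 : (0:ℝ) < |p.1 * p.2| := abs_pos.2 hd
        rw [abs_div, abs_abs, abs_mul, abs_two]
        calc 2 * |G p n| / |p.1 * p.2|
            ≤ 2 * (c ^ 2 * ((n:ℝ)+1) ^ (2-θ) *
              (2 * (c * ((n:ℝ)+1) * (|p.1| + |p.2|)) + (c * ((n:ℝ)+1) * (|p.1| + |p.2|)) ^ 2)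
                * |p.1 * p.2|) / |p.1 * p.2| := by
              gcongr
              exact hGbound1 p n
          _ = 2 * (c ^ 2 * ((n:ℝ)+1) ^ (2-θ) *
              (2 * (c * ((n:ℝ)+1) * (|p.1| + |p.2|)) + (c * ((n:ℝ)+1) * (|p.1| + |p.2|)) ^ 2)) := by
              field_simp
    · have hcont : Continuous (fun p : ℝ × ℝ =>
          2 * (c ^ 2 * ((n:ℝ)+1) ^ (2-θ) *
            (2 * (c * ((n:ℝ)+1) * (|p.1| + |p.2|)) + (c * ((n:ℝ)+1) * (|p.1| + |p.2|)) ^ 2))) := by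
        fun_prop
      have h0 := hcont.tendsto (0, 0)
      simpa using h0
  · apply Eventually.of_forall
    intro p n
    rw [Real.norm_eq_abs]
    by_cases hd : p.1 * p.2 = 0
    · rw [hGzero p hd n]
      simp only [mul_zero, zero_div, abs_zero]
      positivity
    · have hd0 : (0:ℝ) < |p.1 * p.2| := abs_pos.2 hd
      rw [abs_div, abs_abs, abs_mul, abs_two]
      calc 2 * |G p n| / |p.1 * p.2|
          ≤ 2 * (3 * c ^ 2 * ((n:ℝ)+1) ^ (2-θ) * |p.1 * p.2|) / |p.1 * p.2| := by
            gcongr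
            exact hGbound2 p n
        _ = 6 * c ^ 2 * ((n:ℝ)+1) ^ (2-θ) := by field_simp; ring
end

section
/- For any real a, b with b ≤ 0, every eigenvalue of the 2×2 complex matrix M = [[ia + b, b], [b, -ia + b]] has nonpositive real part, and consequently sup_{t ≥ 0} ‖exp(tM)‖ < ∞. -/
open Complex Matrix

set_option maxHeartbeats 1000000
set_option synthInstance.maxHeartbeats 400000

local notation "⟪" x ", " y "⟫" => @inner ℂ _ _ x y

/-- Dissipativity: `Re ⟨Mv, v⟩ ≤ 0` for the matrix `M`. -/
lemma stmt10_key (a b : ℝ) (hb : b ≤ 0) (v : Fin 2 → ℂ) :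
    (dotProduct (star ((!![(a : ℂ) * Complex.I + b, (b : ℂ); (b : ℂ),
      -(a : ℂ) * Complex.I + b]).mulVec v)) v).re ≤ 0 := by
  simp only [Matrix.mulVec, dotProduct, Fin.sum_univ_two, Pi.star_apply,
    Matrix.cons_val', Matrix.cons_val_zero, Matrix.cons_val_one, Matrix.head_cons,
    Matrix.empty_val', Matrix.cons_val_fin_one, Matrix.head_fin_const]
  obtain ⟨p, q⟩ := v 0
  obtain ⟨r, s⟩ := v 1
  simp [Complex.ext_iff, Complex.add_re, Complex.mul_re, Complex.mul_im, Complex.add_im]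
  nlinarith [sq_nonneg (p + r), sq_nonneg (q + s), sq_nonneg p, sq_nonneg q]

/-- For real a, b with b ≤ 0, every eigenvalue of M = [[ia + b, b], [b, -ia + b]] has
nonpositive real part, and consequently sup_{t ≥ 0} ‖exp(tM)‖ < ∞ (as operators on ℂ²). -/
theorem stmt10 (a b : ℝ) (hb : b ≤ 0)
    (M : Matrix (Fin 2) (Fin 2) ℂ)
    (hM : M = !![(a : ℂ) * Complex.I + b, (b : ℂ); (b : ℂ), -(a : ℂ) * Complex.I + b]) :
    (∀ μ ∈ spectrum ℂ M, μ.re ≤ 0) ∧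
    ∃ C : ℝ, ∀ t : ℝ, 0 ≤ t →
      ‖NormedSpace.exp (t • (Matrix.toEuclideanCLM (𝕜 := ℂ) M))‖ ≤ C := by
  have key : ∀ v : Fin 2 → ℂ, (dotProduct (star (M.mulVec v)) v).re ≤ 0 := by
    intro v
    rw [hM]
    exact stmt10_key a b hb v
  constructor
  · -- spectrum part
    intro μ hμ
    rw [spectrum.mem_iff] at hμ
    rw [Matrix.isUnit_iff_isUnit_det, isUnit_iff_ne_zero, not_not] at hμ
    obtain ⟨v, hv0, hv⟩ := (Matrix.exists_mulVec_eq_zero_iff).mpr hμ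
    have hMv : M.mulVec v = μ • v := by
      have := hv
      rw [Matrix.sub_mulVec] at this
      have h1 : (algebraMap ℂ (Matrix (Fin 2) (Fin 2) ℂ) μ).mulVec v = μ • v := by
        rw [Matrix.algebraMap_eq_diagonal]
        ext i
        simp [Matrix.mulVec_diagonal]
      rw [h1, sub_eq_zero] at this
      exact this.symm
    have h2 := key v
    rw [hMv] at h2
    have : (dotProduct (star (μ • v)) v)
        = (starRingEnd ℂ μ) * ∑ i, (starRingEnd ℂ (v i)) * v i := by
      simp [dotProduct, Fin.sum_univ_two, Finset.mul_sum]
      ring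
    rw [this] at h2
    have hS : (∑ i, (starRingEnd ℂ (v i)) * v i) = ((∑ i, Complex.normSq (v i) : ℝ) : ℂ) := by
      push_cast
      refine Finset.sum_congr rfl fun i _ => ?_
      rw [Complex.normSq_eq_conj_mul_self]
    rw [hS] at h2
    have hSpos : 0 < ∑ i, Complex.normSq (v i) := by
      obtain ⟨j, hj⟩ := Function.ne_iff.mp hv0
      have : 0 < Complex.normSq (v j) := by simpa [Complex.normSq_pos] using hj
      refine lt_of_lt_of_le this ?_
      exact Finset.single_le_sum (fun i _ => Complex.normSq_nonneg _) (Finset.mem_univ j)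
    rw [Complex.mul_re] at h2
    simp at h2
    have hpos : 0 < Complex.normSq (v 0) + Complex.normSq (v 1) := by
      simpa [Fin.sum_univ_two] using hSpos
    nlinarith [h2, hpos]
  · -- exponential boundedness part
    set A := Matrix.toEuclideanCLM (𝕜 := ℂ) M with hA
    have keyE : ∀ y : EuclideanSpace ℂ (Fin 2), (⟪A y, y⟫).re ≤ 0 := by
      intro y
      rw [EuclideanSpace.inner_eq_star_dotProduct, dotProduct_comm]
      have : (A y).ofLp = M.mulVec y.ofLp := by
        rw [hA, Matrix.ofLp_toEuclideanCLM]
      rw [this]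
      exact key _
    refine ⟨1, fun t ht => ?_⟩
    refine ContinuousLinearMap.opNorm_le_bound _ zero_le_one (fun x => ?_)
    rw [one_mul]
    set u : ℝ → EuclideanSpace ℂ (Fin 2) := fun s => NormedSpace.exp (s • A) x with hu
    have hderiv : ∀ s : ℝ, HasDerivAt u (A (u s)) s := by
      intro s
      have h1 : HasDerivAt (fun r : ℝ => NormedSpace.exp (r • A))
          (A * NormedSpace.exp (s • A)) s := by
        have h := hasDerivAt_exp_smul_const' (𝕂 := ℝ) A s
        exact h
      have h2 := ((ContinuousLinearMap.apply ℂ (EuclideanSpace ℂ (Fin 2)) x).restrictScalars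
        ℝ).hasFDerivAt.comp_hasDerivAt s h1
      exact h2
    set f : ℝ → ℝ := fun s => (⟪u s, u s⟫).re with hf
    have hfd : ∀ s : ℝ, HasDerivAt f ((⟪u s, A (u s)⟫ + ⟪A (u s), u s⟫).re) s := by
      intro s
      have := ((hderiv s).inner ℂ (hderiv s))
      exact (Complex.reCLM.hasFDerivAt.comp_hasDerivAt s this)
    have hfle : ∀ s : ℝ, deriv f s ≤ 0 := by
      intro s
      rw [(hfd s).deriv]
      have h1 : (⟪u s, A (u s)⟫ + ⟪A (u s), u s⟫).re = 2 * (⟪A (u s), u s⟫).re := by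
        rw [← inner_conj_symm (u s) (A (u s)), Complex.add_re, Complex.conj_re]
        ring
      rw [h1]
      have := keyE (u s)
      linarith
    have hanti : Antitone f :=
      antitone_of_deriv_nonpos (fun s => (hfd s).differentiableAt) hfle
    have hu0 : u 0 = x := by
      show NormedSpace.exp ((0:ℝ) • A) x = x
      have h00 : (0:ℝ) • A = 0 := zero_smul ℝ A
      rw [h00, NormedSpace.exp_zero, ContinuousLinearMap.one_apply]
    have h0 : f 0 = ‖x‖ ^ 2 := by
      show (⟪u 0, u 0⟫).re = _
      rw [hu0, ← RCLike.re_to_complex]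
      exact inner_self_eq_norm_sq x
    have ht2 : f t ≤ f 0 := hanti ht
    have hft : f t = ‖u t‖ ^ 2 := by
      show (⟪u t, u t⟫).re = _
      rw [← RCLike.re_to_complex]
      exact inner_self_eq_norm_sq (u t)
    rw [hft, h0] at ht2
    nlinarith [norm_nonneg (u t), norm_nonneg x, ht2]
end
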